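/- Let H be a Hilbert space, D self-adjoint on H, and Φ bounded self-adjoint with Φ² ≥ d > 0 (as quadratic forms) such that the commutator [D, Φ] extends to a bounded operator with Φ² ≥ d + ‖[D,Φ]‖ everywhere. Then for the operator B₊ = D + iΦ one has ‖B₊ u‖² = ‖Du‖² + ‖Φu‖² + ⟨i[D,Φ]u, u⟩ ≥ d‖u‖² for all u ∈ dom(D); in particular ker(D + iΦ) = 0 and similarly ker(D - iΦ) = 0. -/

import Mathlib

/-- If `Φ² ≥ d + ‖[D,Φ]‖` then `‖(D + iΦ)u‖² = ‖Du‖² + ‖Φu‖² + ⟨i[D,Φ]u,u⟩ ≥ d‖u‖²`;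
in particular `ker (D + iΦ) = 0` and `ker (D - iΦ) = 0`. -/
theorem callias_kernel_vanishing
    {H : Type*} [NormedAddCommGroup H] [InnerProductSpace ℂ H] [CompleteSpace H]
    (D : H →ₗ[ℂ] H)
    (hDsym : ∀ x y : H, (inner ℂ (D x) y : ℂ) = inner ℂ x (D y))
    (Φ : H →L[ℂ] H) (hΦ : IsSelfAdjoint Φ)
    -- K = i[D,Φ] extends to a bounded self-adjoint operator
    (K : H →L[ℂ] H) (hK : ∀ x, K x = Complex.I • (D (Φ x) - Φ (D x)))
    (hKsa : IsSelfAdjoint K)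
    (d : ℝ) (hd : 0 < d)
    -- Φ² - ‖[D,Φ]‖·Id ≥ d·Id as quadratic forms
    (hform : ∀ x : H, (d + ‖K‖) * ‖x‖ ^ 2 ≤ (inner ℂ (Φ (Φ x)) x : ℂ).re) :
    (∀ u : H,
      ‖D u + Complex.I • (Φ u)‖ ^ 2 = ‖D u‖ ^ 2 + ‖Φ u‖ ^ 2 + (inner ℂ (K u) u : ℂ).re) ∧
    (∀ u : H, d * ‖u‖ ^ 2 ≤ ‖D u + Complex.I • (Φ u)‖ ^ 2) ∧
    (∀ u : H, D u + Complex.I • (Φ u) = 0 → u = 0) ∧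
    (∀ u : H, D u - Complex.I • (Φ u) = 0 → u = 0) := by
  have hΦsym : ∀ x y : H, (inner ℂ (Φ x) y : ℂ) = inner ℂ x (Φ y) :=
    ContinuousLinearMap.isSelfAdjoint_iff_isSymmetric.mp hΦ
  -- re ⟨K u, u⟩ in terms of z = ⟨D u, Φ u⟩
  have hKre : ∀ u : H, (inner ℂ (K u) u : ℂ).re
      = 2 * ((Complex.I * (inner ℂ (D u) (Φ u) : ℂ)).re) := by
    intro u
    rw [hK]
    rw [inner_smul_left, inner_sub_left]
    rw [hDsym (Φ u) u, hΦsym (D u) u]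
    rw [← inner_conj_symm (Φ u) (D u)]
    set z : ℂ := inner ℂ (D u) (Φ u)
    simp [Complex.mul_re, Complex.ext_iff, Complex.conj_re, Complex.conj_im]
    ring
  have habs : ∀ u : H, |(inner ℂ (K u) u : ℂ).re| ≤ ‖K‖ * ‖u‖ ^ 2 := by
    intro u
    calc |(inner ℂ (K u) u : ℂ).re| ≤ ‖(inner ℂ (K u) u : ℂ)‖ := Complex.abs_re_le_norm _
      _ ≤ ‖K u‖ * ‖u‖ := norm_inner_le_norm _ _
      _ ≤ ‖K‖ * ‖u‖ * ‖u‖ := by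
            have := K.le_opNorm u
            have h0 : (0:ℝ) ≤ ‖u‖ := norm_nonneg _
            nlinarith
      _ = ‖K‖ * ‖u‖ ^ 2 := by ring
  have hPhiSq : ∀ u : H, (d + ‖K‖) * ‖u‖ ^ 2 ≤ ‖Φ u‖ ^ 2 := by
    intro u
    have := hform u
    rw [hΦsym (Φ u) u, inner_self_eq_norm_sq_to_K] at this
    simpa [← Complex.ofReal_pow] using this
  have heq : ∀ u : H,
      ‖D u + Complex.I • (Φ u)‖ ^ 2 = ‖D u‖ ^ 2 + ‖Φ u‖ ^ 2 + (inner ℂ (K u) u : ℂ).re := by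
    intro u
    rw [@norm_add_sq ℂ _ _ _ _ (D u) (Complex.I • Φ u)]
    rw [inner_smul_right, norm_smul, hKre]
    simp [Complex.norm_I]
    ring
  have heq2 : ∀ u : H,
      ‖D u - Complex.I • (Φ u)‖ ^ 2 = ‖D u‖ ^ 2 + ‖Φ u‖ ^ 2 - (inner ℂ (K u) u : ℂ).re := by
    intro u
    rw [@norm_sub_sq ℂ _ _ _ _ (D u) (Complex.I • Φ u)]
    rw [inner_smul_right, norm_smul, hKre]
    simp [Complex.norm_I]
    ring
  have hlb : ∀ u : H, d * ‖u‖ ^ 2 ≤ ‖D u + Complex.I • (Φ u)‖ ^ 2 := by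
    intro u
    rw [heq u]
    have h1 := hPhiSq u
    have h2 := (abs_le.mp (habs u)).1
    have h3 : (0:ℝ) ≤ ‖D u‖ ^ 2 := sq_nonneg _
    nlinarith
  refine ⟨heq, hlb, ?_, ?_⟩
  · intro u hu
    have h := hlb u
    rw [hu] at h
    simp at h
    have h0 : ‖u‖ ^ 2 = 0 := le_antisymm (by nlinarith) (sq_nonneg _)
    have : ‖u‖ = 0 := by
      simpa using pow_eq_zero_iff (n := 2) (by norm_num) |>.mp h0
    simpa using this
  · intro u hu
    have hlb2 : d * ‖u‖ ^ 2 ≤ ‖D u - Complex.I • (Φ u)‖ ^ 2 := by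
      rw [heq2 u]
      have h1 := hPhiSq u
      have h2 := (abs_le.mp (habs u)).2
      have h3 : (0:ℝ) ≤ ‖D u‖ ^ 2 := sq_nonneg _
      nlinarith
    rw [hu] at hlb2
    simp at hlb2
    have h0 : ‖u‖ ^ 2 = 0 := le_antisymm (by nlinarith) (sq_nonneg _)
    have : ‖u‖ = 0 := by
      simpa using pow_eq_zero_iff (n := 2) (by norm_num) |>.mp h0
    simpa using this
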